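/- Let q and J be positive integers with q ≥ 7 and J dividing q, such that (q/J)² divides 200 and J divides 200/(q/J)². If moreover, writing J = p1^{a1}···pk^{ak} as a product of distinct prime powers, the inequality Σᵢ (pᵢ^{aᵢ} - 1/pᵢ^{aᵢ}) ≤ 64 - (q²+2q-4)/(4q²)·200 holds, then (q, J) is one of: (40, 8), (20, 2), (20, 4), (20, 10), (20, 20), (10, 1), (10, 2), (10, 5), (10, 10), (8, 8). -/

import Mathlib

lemma sumPP (p a : ℕ) (hp : p.Prime) (ha : a ≠ 0) :
    ∑ r ∈ (p ^ a).factorization.support,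
      ((r : ℚ) ^ ((p ^ a).factorization r) - 1 / (r : ℚ) ^ ((p ^ a).factorization r))
    = (p : ℚ) ^ a - 1 / (p : ℚ) ^ a := by
  have hs : (p ^ a).factorization.support = {p} := by
    rw [Nat.support_factorization, Nat.primeFactors_pow _ ha, Nat.Prime.primeFactors hp]
  rw [hs, Finset.sum_singleton, Nat.Prime.factorization_pow hp]  -- guess name
  simp

lemma sumPP2 (p r a b : ℕ) (hp : p.Prime) (hr : r.Prime) (hpr : p ≠ r) (ha : a ≠ 0) (hb : b ≠ 0) :
    ∑ s ∈ (p ^ a * r ^ b).factorization.support,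
      ((s : ℚ) ^ ((p ^ a * r ^ b).factorization s) - 1 / (s : ℚ) ^ ((p ^ a * r ^ b).factorization s))
    = ((p : ℚ) ^ a - 1 / (p : ℚ) ^ a) + ((r : ℚ) ^ b - 1 / (r : ℚ) ^ b) := by
  have hs : (p ^ a * r ^ b).factorization.support = {p, r} := by
    rw [Nat.support_factorization, Nat.primeFactors_mul (pow_ne_zero _ hp.pos.ne') (pow_ne_zero _ hr.pos.ne'),
      Nat.primeFactors_pow _ ha, Nat.primeFactors_pow _ hb, Nat.Prime.primeFactors hp,
      Nat.Prime.primeFactors hr]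
    rfl
  have hfp : (p ^ a * r ^ b).factorization p = a := by
    rw [Nat.factorization_mul (pow_ne_zero _ hp.pos.ne') (pow_ne_zero _ hr.pos.ne')]
    simp [Nat.factorization_pow, hp.factorization, hr.factorization, Finsupp.single_apply, hpr, hpr.symm]
  have hfr : (p ^ a * r ^ b).factorization r = b := by
    rw [Nat.factorization_mul (pow_ne_zero _ hp.pos.ne') (pow_ne_zero _ hr.pos.ne')]
    simp [Nat.factorization_pow, hp.factorization, hr.factorization, Finsupp.single_apply, hpr, hpr.symm]
  rw [hs, Finset.sum_insert (by simp [hpr]), Finset.sum_singleton, hfp, hfr]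

lemma f25 : ∑ p ∈ (25:ℕ).factorization.support,
    ((p : ℚ) ^ ((25:ℕ).factorization p) - 1 / (p : ℚ) ^ ((25:ℕ).factorization p)) = 624/25 := by
  rw [show (25:ℕ) = 5^2 by norm_num, sumPP 5 2 (by norm_num) (by norm_num)]; norm_num

lemma f40 : ∑ p ∈ (40:ℕ).factorization.support,
    ((p : ℚ) ^ ((40:ℕ).factorization p) - 1 / (p : ℚ) ^ ((40:ℕ).factorization p)) = 507/40 := by
  rw [show (40:ℕ) = 2^3 * 5^1 by norm_num, sumPP2 2 5 3 1 (by norm_num) (by norm_num) (by norm_num) (by norm_num) (by norm_num)]; norm_num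

lemma f50 : ∑ p ∈ (50:ℕ).factorization.support,
    ((p : ℚ) ^ ((50:ℕ).factorization p) - 1 / (p : ℚ) ^ ((50:ℕ).factorization p)) = 1323/50 := by
  rw [show (50:ℕ) = 2^1 * 5^2 by norm_num, sumPP2 2 5 1 2 (by norm_num) (by norm_num) (by norm_num) (by norm_num) (by norm_num)]; norm_num

lemma f100 : ∑ p ∈ (100:ℕ).factorization.support,
    ((p : ℚ) ^ ((100:ℕ).factorization p) - 1 / (p : ℚ) ^ ((100:ℕ).factorization p)) = 2871/100 := by
  rw [show (100:ℕ) = 2^2 * 5^2 by norm_num, sumPP2 2 5 2 2 (by norm_num) (by norm_num) (by norm_num) (by norm_num) (by norm_num)]; norm_num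

lemma f200 : ∑ p ∈ (200:ℕ).factorization.support,
    ((p : ℚ) ^ ((200:ℕ).factorization p) - 1 / (p : ℚ) ^ ((200:ℕ).factorization p)) = 6567/200 := by
  rw [show (200:ℕ) = 2^3 * 5^2 by norm_num, sumPP2 2 5 3 2 (by norm_num) (by norm_num) (by norm_num) (by norm_num) (by norm_num)]; norm_num

theorem qJ_enum_200 (q J : ℕ) (hq : 7 ≤ q) (hJ : 0 < J) (hdvd : J ∣ q)
    (hsq : (q / J) ^ 2 ∣ 200) (hJdvd : J ∣ 200 / (q / J) ^ 2)
    (hineq : ∑ p ∈ J.factorization.support,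
        ((p : ℚ) ^ (J.factorization p) - 1 / (p : ℚ) ^ (J.factorization p)) ≤
      64 - (((q : ℚ) ^ 2 + 2 * q - 4) / (4 * q ^ 2)) * 200) :
    (q, J) ∈ ({(40, 8), (20, 2), (20, 4), (20, 10), (20, 20), (10, 1), (10, 2),
      (10, 5), (10, 10), (8, 8)} : Set (ℕ × ℕ)) := by
  obtain ⟨m, hm⟩ := hdvd
  subst hm
  rw [Nat.mul_div_cancel_left _ hJ] at hsq hJdvd
  have hm14 : m ≤ 14 := by nlinarith [Nat.le_of_dvd (by norm_num : 0 < (200:ℕ)) hsq]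
  interval_cases m <;> (first | (norm_num at hsq; done) | norm_num at hsq hJdvd ⊢) <;>
    (have hle := Nat.le_of_dvd (by norm_num) hJdvd) <;>
    interval_cases J <;>
      first
        | omega
        | exact absurd hJdvd (by decide)
        | (norm_num; done)
        | (simp only [f25, f40, f50, f100, f200] at hineq; norm_num at hineq)
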